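/- For σ ∈ ℝ and k = (k₁,…,k_n) ∈ (ℤ_{≥2})ⁿ, SLs(k; σ) = (-1)ⁿ Σ_{j ≤ k - 2ₙ} (∏_u C(k_u-2, j_u)) (-σ)^{|k - 2ₙ - j|} Ls_{j+2ₙ}^{j}(σ), where 2ₙ = (2,…,2), the sum is over j ∈ (ℤ_{≥0})ⁿ with j_u ≤ k_u - 2 for all u, and Ls_{j+2ₙ}^{j}(σ) is the iterated log-sine integral with index (j₁+2,…,j_n+2) and exponent vector (j₁,…,j_n). -/

import Mathlib

open MeasureTheory Real

/-- `A θ = log |2 sin (θ/2)|`. -/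
noncomputable def A (θ : ℝ) : ℝ := Real.log |2 * Real.sin (θ / 2)|

lemma log01 : IntervalIntegrable Real.log MeasureTheory.volume 0 1 := by
  rw [intervalIntegrable_iff, Set.uIoc_of_le (by norm_num : (0:ℝ) ≤ 1)]
  have hg : IntegrableOn (fun x : ℝ => 2 * x ^ (-(1:ℝ)/2)) (Set.Ioc 0 1) volume := by
    have := (intervalIntegral.intervalIntegrable_rpow' (a := 0) (b := 1) (r := -(1:ℝ)/2) (by norm_num))
    rw [intervalIntegrable_iff, Set.uIoc_of_le (by norm_num : (0:ℝ) ≤ 1)] at this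
    exact this.const_mul 2
  refine MeasureTheory.Integrable.mono hg ?_ ?_
  · exact Real.measurable_log.aestronglyMeasurable.restrict
  · refine (ae_restrict_iff' measurableSet_Ioc).2 (Filter.Eventually.of_forall ?_)
    intro x hx
    have hx0 : 0 < x := hx.1
    have hrp : (0:ℝ) < x ^ (-(1:ℝ)/2) := Real.rpow_pos_of_pos hx0 _
    have hlogle : Real.log x ≤ 0 := Real.log_nonpos hx0.le hx.2
    have key : -Real.log x ≤ 2 * x ^ (-(1:ℝ)/2) := by
      have h1 : Real.log (x ^ (-(1:ℝ)/2)) = (-(1:ℝ)/2) * Real.log x := Real.log_rpow hx0 _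
      have h2 : Real.log (x ^ (-(1:ℝ)/2)) ≤ x ^ (-(1:ℝ)/2) - 1 :=
        Real.log_le_sub_one_of_pos hrp
      nlinarith
    rw [Real.norm_eq_abs, Real.norm_eq_abs, abs_of_nonpos hlogle, abs_of_nonneg (by positivity)]
    exact key

lemma logabs_pi : IntervalIntegrable (fun x : ℝ => Real.log |x|) MeasureTheory.volume (-π) π := by
  have hpos : IntervalIntegrable (fun x : ℝ => Real.log |x|) volume 0 π := by
    have h1 : IntervalIntegrable Real.log volume 0 π := by
      refine log01.trans (intervalIntegral.intervalIntegrable_log ?_)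
      intro h
      rcases h with h
      have := Set.mem_uIcc.mp h
      rcases this with ⟨h1, _⟩ | ⟨_, h2⟩ <;> nlinarith [Real.pi_pos]
    rw [intervalIntegrable_iff, Set.uIoc_of_le Real.pi_pos.le] at h1 ⊢
    exact h1.congr_fun (fun x hx => by rw [abs_of_pos hx.1]) measurableSet_Ioc
  have hneg : IntervalIntegrable (fun x : ℝ => Real.log |x|) volume (-π) 0 := by
    have := (IntervalIntegrable.iff_comp_neg (by simp)).mp hpos
    simp only [abs_neg, neg_zero] at this
    exact this.symm
  exact hneg.trans hpos

lemma A_measurable : Measurable A := by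
  exact Real.measurable_log.comp ((measurable_const.mul (Real.measurable_sin.comp (measurable_id.div_const 2))).abs)

lemma A_bound {x : ℝ} (hx0 : x ≠ 0) (hx : |x| ≤ π) :
    |A x| ≤ |Real.log (|x|)| + Real.log (π / 2) := by
  have hpi := Real.pi_pos
  set t := |x| with ht
  have ht0 : 0 < t := abs_pos.mpr hx0
  have habs : |2 * Real.sin (x / 2)| = 2 * Real.sin (t / 2) := by
    rcases le_or_gt 0 x with h | h
    · have htx : t = x := abs_of_nonneg h
      have hs : 0 ≤ Real.sin (x / 2) :=
        Real.sin_nonneg_of_nonneg_of_le_pi (by linarith) (by linarith [htx ▸ hx])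
      rw [htx, abs_of_nonneg (by linarith)]
    · have htx : t = -x := abs_of_neg h
      have hs : 0 ≤ Real.sin (-x / 2) :=
        Real.sin_nonneg_of_nonneg_of_le_pi (by linarith) (by linarith [htx ▸ hx])
      have hneg : Real.sin (x / 2) ≤ 0 := by
        have : Real.sin (-x / 2) = -Real.sin (x / 2) := by rw [neg_div, Real.sin_neg]
        linarith [this ▸ hs]
      rw [htx, abs_of_nonpos (by linarith), neg_div, Real.sin_neg]; ring
  have hAx : A x = Real.log (2 * Real.sin (t / 2)) := by unfold A; rw [habs]
  have hsinpos : 0 < Real.sin (t / 2) :=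
    Real.sin_pos_of_pos_of_lt_pi (by positivity) (by linarith)
  have hupper : A x ≤ Real.log t := by
    rw [hAx]
    apply Real.log_le_log (by positivity)
    nlinarith [Real.sin_lt (show 0 < t / 2 by positivity)]
  have hlower : Real.log t - Real.log (π / 2) ≤ A x := by
    rw [hAx]
    have hj : 2 / π * (t / 2) ≤ Real.sin (t / 2) :=
      Real.mul_le_sin (by positivity) (by linarith)
    have h1 : Real.log (t / (π / 2)) ≤ Real.log (2 * Real.sin (t / 2)) := by
      apply Real.log_le_log (by positivity)
      have hπ : π ≠ 0 := ne_of_gt hpi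
      have he : t / (π / 2) = 2 * (2 / π * (t / 2)) := by field_simp
      rw [he]; linarith
    rwa [Real.log_div (ne_of_gt ht0) (by positivity)] at h1
  have hc : 0 ≤ Real.log (π / 2) := Real.log_nonneg (by nlinarith [Real.pi_gt_three])
  rw [abs_le]
  constructor
  · have := neg_abs_le (Real.log t); linarith
  · have := le_abs_self (Real.log t); linarith

lemma A_int_base : IntervalIntegrable A MeasureTheory.volume (-π) π := by
  have hpi := Real.pi_pos
  rw [intervalIntegrable_iff, Set.uIoc_of_le (by linarith)]
  have hg : IntegrableOn (fun x : ℝ => |Real.log (|x|)| + Real.log (π / 2)) (Set.Ioc (-π) π)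
      volume := by
    have h1 : IntervalIntegrable (fun x : ℝ => |Real.log (|x|)| + Real.log (π / 2)) volume (-π) π := by
      have := logabs_pi.norm
      simp only [Real.norm_eq_abs] at this
      exact this.add (intervalIntegrable_const)
    rw [intervalIntegrable_iff, Set.uIoc_of_le (by linarith)] at h1
    exact h1
  refine MeasureTheory.Integrable.mono hg A_measurable.aestronglyMeasurable.restrict ?_
  have h0 : ∀ᵐ x ∂(volume.restrict (Set.Ioc (-π) π)), x ≠ (0:ℝ) := by
    refine MeasureTheory.ae_restrict_of_ae ?_
    refine MeasureTheory.ae_iff.mpr ?_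
    simp [Set.setOf_eq_eq_singleton]
  filter_upwards [h0, (ae_restrict_iff' measurableSet_Ioc).2
    (Filter.Eventually.of_forall (fun x (hx : x ∈ Set.Ioc (-π) π) => hx))] with x hx0 hx
  have hb := A_bound hx0 (abs_le.mpr ⟨hx.1.le, hx.2⟩)
  have : (0:ℝ) ≤ |Real.log (|x|)| + Real.log (π / 2) := by
    have : 0 ≤ Real.log (π / 2) := Real.log_nonneg (by nlinarith [Real.pi_gt_three])
    positivity
  rw [Real.norm_eq_abs, Real.norm_eq_abs, abs_of_nonneg this]
  exact hb

lemma A_periodic : Function.Periodic A (2 * π) := by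
  intro x
  unfold A
  have : (x + 2 * π) / 2 = x / 2 + π := by ring
  rw [this, Real.sin_add_pi]
  rw [mul_neg, abs_neg]

lemma periodic_II {f : ℝ → ℝ} {T a : ℝ} (hT : 0 < T) (hp : Function.Periodic f T)
    (h : IntervalIntegrable f MeasureTheory.volume a (a + T)) (c d : ℝ) :
    IntervalIntegrable f MeasureTheory.volume c d := by
  have hshift : ∀ m : ℤ, IntervalIntegrable f volume (a + m * T) (a + m * T + T) := by
    intro m
    have h2 := h.comp_add_right (-(m * T))
    have hfe : (fun x => f (x + -(m * T))) = f := by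
      funext x
      rw [← sub_eq_add_neg]
      exact hp.sub_int_mul_eq m
    rw [hfe] at h2
    convert h2 using 1 <;> ring
  have hiter : ∀ (N : ℕ) (m : ℤ), IntervalIntegrable f volume (a + m * T) (a + m * T + N * T) := by
    intro N
    induction N with
    | zero => intro m; simpa using IntervalIntegrable.refl
    | succ N ih =>
      intro m
      have h1 := ih m
      have h2 : IntervalIntegrable f volume (a + m * T + N * T) (a + m * T + N * T + T) := by
        have h4 := hshift (m + N)
        push_cast at h4
        have he1 : a + ((m:ℝ) + (N:ℝ)) * T = a + m * T + N * T := by ring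
        rwa [he1] at h4
      have h3 := h1.trans h2
      convert h3 using 1
      push_cast; ring
  set m : ℤ := ⌊(min c d - a) / T⌋ with hm
  set N : ℕ := ⌈(max c d - (a + m * T)) / T⌉₊ with hN
  have hlo : a + m * T ≤ min c d := by
    have h1 : (m:ℝ) ≤ (min c d - a) / T := Int.floor_le _
    have h2 := (le_div_iff₀ hT).mp h1
    linarith
  have hhi : max c d ≤ a + m * T + N * T := by
    have h1 : (max c d - (a + m * T)) / T ≤ (N : ℝ) := Nat.le_ceil _
    have h2 := (div_le_iff₀ hT).mp h1
    linarith
  have hNT : (0:ℝ) ≤ (N:ℝ) * T := mul_nonneg (Nat.cast_nonneg N) hT.le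
  exact (hiter N m).mono_set (by
    rw [Set.uIcc_subset_uIcc_iff_le]
    refine ⟨?_, ?_⟩
    · have h5 : (a + m * T) ⊓ (a + m * T + N * T) = a + m * T := min_eq_left (by linarith)
      rw [h5]; exact hlo
    · have h5 : (a + m * T) ⊔ (a + m * T + N * T) = a + m * T + N * T := max_eq_right (by linarith)
      rw [h5]; exact hhi)

lemma A_int (a b : ℝ) : IntervalIntegrable A MeasureTheory.volume a b := by
  have hpi := Real.pi_pos
  refine periodic_II (f := A) (T := 2 * π) (a := -π) (by linarith) A_periodic ?_ a b
  have : -π + 2 * π = π := by ring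
  rw [this]
  exact A_int_base

/-- Nested iterated integral; the list is in reverse order (outermost variable first). -/
noncomputable def LsNest (ρ : ℝ) : List (ℕ × ℕ) → ℝ → ℝ
  | [] => fun _ => 1
  | p :: rest => fun σ => ∫ θ in ρ..σ, θ ^ p.2 * A θ ^ (p.1 - 1 - p.2) * LsNest ρ rest θ

/-- The iterated log-sine integral `Ls_k^l(ρ; σ)`. -/
noncomputable def Ls {n : ℕ} (k l : Fin n → ℕ) (ρ σ : ℝ) : ℝ :=
  (-1 : ℝ) ^ n * LsNest ρ ((List.ofFn fun u => (k u, l u)).reverse) σ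

/-- Nested integral for shifted log-sine integrals; the list is in reverse order
(outermost variable first). -/
noncomputable def SLsNest (σ : ℝ) : List ℕ → ℝ → ℝ
  | [] => fun _ => 1
  | p :: rest => fun t => ∫ θ in (0:ℝ)..t, (θ - σ) ^ (p - 2) * A θ * SLsNest σ rest θ

/-- The shifted log-sine integral `SLs(k₁,…,k_n; σ)`. -/
noncomputable def SLs {n : ℕ} (k : Fin n → ℕ) (σ : ℝ) : ℝ :=
  SLsNest σ ((List.ofFn k).reverse) σ

/-- Good lists: exponent of `A` is 1 in each slot. -/
def GoodL (L : List (ℕ × ℕ)) : Prop := ∀ p ∈ L, p.1 = p.2 + 2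

lemma integrand_II {m : ℕ} {F : ℝ → ℝ} (hF : Continuous F) (a b : ℝ) :
    IntervalIntegrable (fun θ => θ ^ m * A θ * F θ) MeasureTheory.volume a b :=
  (((A_int a b).continuousOn_mul (continuous_pow m).continuousOn).mul_continuousOn
    hF.continuousOn)

lemma LsNest_cont : ∀ L : List (ℕ × ℕ), GoodL L → Continuous (LsNest 0 L)
  | [], _ => continuous_const
  | p :: rest, h => by
    have hrest : Continuous (LsNest 0 rest) :=
      LsNest_cont rest (fun q hq => h q (List.mem_cons_of_mem _ hq))
    have hp : p.1 - 1 - p.2 = 1 := by have := h p List.mem_cons_self; omega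
    show Continuous fun σ => ∫ θ in (0:ℝ)..σ, θ ^ p.2 * A θ ^ (p.1 - 1 - p.2) * LsNest 0 rest θ
    simp only [hp, pow_one]
    exact intervalIntegral.continuous_primitive
      (fun a b => integrand_II hrest a b) 0

lemma good_pairs {n : ℕ} (g : Fin n → ℕ) :
    GoodL ((List.ofFn fun u => (g u + 2, g u)).reverse) := by
  intro p hp
  rw [List.mem_reverse, List.mem_ofFn] at hp
  obtain ⟨u, hu⟩ := hp
  rw [← hu]

lemma LsNest_cons_eq (i : ℕ) (L : List (ℕ × ℕ)) (t : ℝ) :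
    LsNest 0 ((i + 2, i) :: L) t = ∫ θ in (0:ℝ)..t, θ ^ i * A θ * LsNest 0 L θ := by
  show (∫ θ in (0:ℝ)..t, θ ^ i * A θ ^ (i + 2 - 1 - i) * LsNest 0 L θ) = _
  have h1 : i + 2 - 1 - i = 1 := by omega
  simp only [h1, pow_one]

lemma key (σ : ℝ) : ∀ (n : ℕ) (k : Fin n → ℕ), (∀ u, 2 ≤ k u) → ∀ t : ℝ,
    SLsNest σ ((List.ofFn k).reverse) t
      = ∑ j : (u : Fin n) → Fin (k u - 1),
          (∏ u, (Nat.choose (k u - 2) (j u) : ℝ)) * (-σ) ^ (∑ u, (k u - 2 - (j u : ℕ))) *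
            LsNest 0 ((List.ofFn fun u => ((j u : ℕ) + 2, (j u : ℕ))).reverse) t := by
  intro n
  induction n with
  | zero =>
    intro k hk t
    simp [SLsNest, LsNest]
  | succ n ih =>
    intro k hk t
    have hK : ∀ u : Fin n, 2 ≤ k u.castSucc := fun u => hk _
    have hklast := hk (Fin.last n)
    have hM1 : k (Fin.last n) - 1 = (k (Fin.last n) - 2) + 1 := by omega
    -- notation
    set M := k (Fin.last n) - 2 with hM
    have hL : (List.ofFn k).reverse
        = k (Fin.last n) :: (List.ofFn fun i : Fin n => k i.castSucc).reverse := by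
      rw [List.ofFn_succ', List.concat_eq_append, List.reverse_append,
        List.reverse_singleton, List.singleton_append]
    rw [hL]
    show (∫ θ in (0:ℝ)..t, (θ - σ) ^ (k (Fin.last n) - 2) * A θ *
        SLsNest σ ((List.ofFn fun i : Fin n => k i.castSucc).reverse) θ) = _
    -- pointwise expansion of the integrand
    have hInt : ∀ θ : ℝ, (θ - σ) ^ (k (Fin.last n) - 2) * A θ *
        SLsNest σ ((List.ofFn fun i : Fin n => k i.castSucc).reverse) θ
        = ∑ p : Fin (k (Fin.last n) - 1) × ((u : Fin n) → Fin (k u.castSucc - 1)),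
            (((Nat.choose M (p.1 : ℕ)) : ℝ) * (-σ) ^ (M - (p.1 : ℕ)) *
              ((∏ u, (Nat.choose (k u.castSucc - 2) (p.2 u) : ℝ)) *
                (-σ) ^ (∑ u, (k u.castSucc - 2 - (p.2 u : ℕ))))) *
            (θ ^ (p.1 : ℕ) * A θ *
              LsNest 0 ((List.ofFn fun u => ((p.2 u : ℕ) + 2, (p.2 u : ℕ))).reverse) θ) := by
      intro θ
      rw [ih (fun i => k i.castSucc) hK θ]
      have hbin : (θ - σ) ^ (k (Fin.last n) - 2)
          = ∑ i : Fin (k (Fin.last n) - 1),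
              ((Nat.choose M (i : ℕ)) : ℝ) * θ ^ (i : ℕ) * (-σ) ^ (M - (i : ℕ)) := by
        rw [Fin.sum_univ_eq_sum_range
          (fun i => ((Nat.choose M i : ℝ)) * θ ^ i * (-σ) ^ (M - i)) (k (Fin.last n) - 1)]
        rw [hM1, ← hM, sub_eq_add_neg, add_pow]
        exact Finset.sum_congr rfl fun i hi => by ring
      rw [hbin, Finset.sum_mul, Finset.sum_mul, Fintype.sum_prod_type]
      refine Finset.sum_congr rfl fun i _ => ?_
      rw [Finset.mul_sum]
      exact Finset.sum_congr rfl fun j _ => by ring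
    simp only [hInt]
    have hII : ∀ p ∈ (Finset.univ :
        Finset (Fin (k (Fin.last n) - 1) × ((u : Fin n) → Fin (k u.castSucc - 1)))),
        IntervalIntegrable (fun θ : ℝ =>
          (((Nat.choose M (p.1 : ℕ)) : ℝ) * (-σ) ^ (M - (p.1 : ℕ)) *
              ((∏ u, (Nat.choose (k u.castSucc - 2) (p.2 u) : ℝ)) *
                (-σ) ^ (∑ u, (k u.castSucc - 2 - (p.2 u : ℕ))))) *
            (θ ^ (p.1 : ℕ) * A θ *
              LsNest 0 ((List.ofFn fun u => ((p.2 u : ℕ) + 2, (p.2 u : ℕ))).reverse) θ))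
          MeasureTheory.volume 0 t := by
      intro p _
      exact (integrand_II (LsNest_cont _ (good_pairs (fun u => (p.2 u : ℕ)))) 0 t).const_mul _
    rw [intervalIntegral.integral_finset_sum hII]
    simp only [intervalIntegral.integral_const_mul, ← LsNest_cons_eq]
    -- reindex
    refine Fintype.sum_equiv (Fin.snocEquiv fun u => Fin (k u - 1)) _ _ ?_
    rintro ⟨i, j'⟩
    have e_apply : (Fin.snocEquiv fun u => Fin (k u - 1)) (i, j') = Fin.snoc j' i := rfl
    rw [e_apply]
    have hprod : (∏ u : Fin (n+1), (Nat.choose (k u - 2) ((Fin.snoc j' i : ∀ u, Fin (k u - 1)) u) : ℝ))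
        = (∏ u : Fin n, (Nat.choose (k u.castSucc - 2) (j' u) : ℝ)) * (Nat.choose M (i : ℕ) : ℝ) := by
      rw [Fin.prod_univ_castSucc]
      simp only [Fin.snoc_castSucc, Fin.snoc_last, hM]
    have hsum : (∑ u : Fin (n+1), (k u - 2 - ((Fin.snoc j' i : ∀ u, Fin (k u - 1)) u : ℕ)))
        = (∑ u : Fin n, (k u.castSucc - 2 - (j' u : ℕ))) + (M - (i : ℕ)) := by
      rw [Fin.sum_univ_castSucc]
      simp only [Fin.snoc_castSucc, Fin.snoc_last, hM]
    have hlist : (List.ofFn fun u : Fin (n+1) =>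
          (((Fin.snoc j' i : ∀ u, Fin (k u - 1)) u : ℕ) + 2,
            ((Fin.snoc j' i : ∀ u, Fin (k u - 1)) u : ℕ))).reverse
        = ((i : ℕ) + 2, (i : ℕ)) ::
            (List.ofFn fun u : Fin n => ((j' u : ℕ) + 2, (j' u : ℕ))).reverse := by
      rw [List.ofFn_succ', List.concat_eq_append, List.reverse_append]
      simp only [Fin.snoc_castSucc, Fin.snoc_last, List.reverse_singleton, List.singleton_append]
    rw [hprod, hsum, hlist, pow_add]
    ring

/-- `SLs(k;σ) = (-1)ⁿ Σ_{j ≤ k-2ₙ} binom(k-2ₙ, j) (-σ)^{|k-2ₙ-j|} Ls_{j+2ₙ}^{j}(σ)`. -/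
theorem stmt6 (σ : ℝ) (n : ℕ) (k : Fin n → ℕ) (hk : ∀ u, 2 ≤ k u) :
    SLs k σ = (-1 : ℝ) ^ n *
      ∑ j : (u : Fin n) → Fin (k u - 1),
        (∏ u, (Nat.choose (k u - 2) (j u) : ℝ)) *
          (-σ) ^ (∑ u, (k u - 2 - (j u : ℕ))) *
          Ls (fun u => (j u : ℕ) + 2) (fun u => (j u : ℕ)) 0 σ := by
  have hkey := key σ n k hk σ
  show SLsNest σ ((List.ofFn k).reverse) σ = _
  rw [hkey, Finset.mul_sum]
  refine Finset.sum_congr rfl fun j _ => ?_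
  have h1 : ((-1:ℝ)) ^ n * ((-1:ℝ)) ^ n = 1 := by rw [← mul_pow]; norm_num
  unfold Ls
  rw [show ∀ x y : ℝ, (-1:ℝ) ^ n * (x * ((-1:ℝ) ^ n * y))
      = ((-1:ℝ) ^ n * (-1:ℝ) ^ n) * (x * y) from fun x y => by ring, h1, one_mul]
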